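/- arXiv:2211.12595 — 2 statements merged into one kernel-verified Lean document; each statement's English description precedes it below -/
import Mathlib

section
/- For any piecewise constant function f = Σ_j θ_j 1_{I_j} on the uniform J^d partition of [0,1]^d and any p ≥ 1, the L^p(λ) projection of f onto the class M of coordinatewise nondecreasing functions on [0,1]^d exists and can be taken to be piecewise constant on the same partition; moreover any minimizer of ||f - h||_{p,λ} over piecewise constant monotone functions h on this partition achieves the infimum over all of M. -/
open MeasureTheory Real

noncomputable section

def unitCube (d : ℕ) : Set (Fin d → ℝ) := Set.Icc 0 1

def block (d J : ℕ) (j : Fin d → Fin J) : Set (Fin d → ℝ) :=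
  {x | ∀ k, (if (j k : ℕ) = 0 then (0:ℝ) ≤ x k else ((j k : ℕ) : ℝ) / J < x k) ∧
        x k ≤ (((j k : ℕ) : ℝ) + 1) / J}

def pc (d J : ℕ) (θ : (Fin d → Fin J) → ℝ) : (Fin d → ℝ) → ℝ :=
  fun x => ∑ j : Fin d → Fin J, Set.indicator (block d J j) (fun _ => θ j) x

def MonOn (d : ℕ) (f : (Fin d → ℝ) → ℝ) : Prop :=
  ∀ x ∈ unitCube d, ∀ y ∈ unitCube d, x ≤ y → f x ≤ f y

def blockAvg (d J : ℕ) (h : (Fin d → ℝ) → ℝ) : (Fin d → ℝ) → ℝ :=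
  pc d J fun j => (∫ y in block d J j, h y) / (volume (block d J j)).toReal

namespace LpProj

open Set

variable {d J : ℕ}

def cInt (J : ℕ) (m : ℕ) : Set ℝ :=
  if m = 0 then Set.Icc 0 ((m + 1 : ℝ) / J) else Set.Ioc ((m : ℝ) / J) ((m + 1 : ℝ) / J)

lemma block_eq_pi (j : Fin d → Fin J) :
    block d J j = Set.pi Set.univ (fun k => cInt J (j k)) := by
  ext x
  simp only [block, Set.mem_setOf_eq, Set.mem_pi, Set.mem_univ, forall_true_left, cInt]
  refine forall_congr' fun k => ?_
  by_cases h : (j k : ℕ) = 0 <;> simp [h, Set.mem_Icc, Set.mem_Ioc]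

lemma measurableSet_block (j : Fin d → Fin J) : MeasurableSet (block d J j) := by
  rw [block_eq_pi]
  refine MeasurableSet.univ_pi fun k => ?_
  unfold cInt; split <;> exact (by measurability)

lemma volume_cInt (hJ : 0 < J) (m : ℕ) : volume (cInt J m) = ENNReal.ofReal (1 / J) := by
  have hJ' : (0:ℝ) < J := by exact_mod_cast hJ
  unfold cInt
  split
  · rename_i h; subst h
    rw [Real.volume_Icc]
    congr 1
    push_cast
    ring
  · rw [Real.volume_Ioc]
    congr 1
    field_simp
    ring

lemma volume_block (hJ : 0 < J) (j : Fin d → Fin J) :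
    volume (block d J j) = ENNReal.ofReal ((1 / J : ℝ) ^ d) := by
  rw [block_eq_pi, volume_pi_pi]
  simp only [volume_cInt hJ]
  rw [Finset.prod_const, ← ENNReal.ofReal_pow (by positivity)]
  simp

lemma volume_block_toReal (hJ : 0 < J) (j : Fin d → Fin J) :
    (volume (block d J j)).toReal = (1 / J : ℝ) ^ d := by
  rw [volume_block hJ, ENNReal.toReal_ofReal (by positivity)]

lemma block_subset_cube (hJ : 0 < J) (j : Fin d → Fin J) : block d J j ⊆ unitCube d := by
  intro x hx
  have hJ' : (0:ℝ) < J := by exact_mod_cast hJ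
  refine ⟨fun k => ?_, fun k => ?_⟩
  · show (0:ℝ) ≤ x k
    rcases hx k with ⟨h1, _⟩
    by_cases h : (j k : ℕ) = 0
    · simpa [h] using h1
    · simp only [h, if_false] at h1
      have : (0:ℝ) ≤ ((j k : ℕ) : ℝ) / J := by positivity
      exact le_of_lt (lt_of_le_of_lt this h1)
  · show x k ≤ (1:ℝ)
    rcases hx k with ⟨_, h2⟩
    refine le_trans h2 ?_
    rw [div_le_one hJ']
    have : (j k : ℕ) + 1 ≤ J := (j k).2
    exact_mod_cast this

lemma block_unique (hJ : 0 < J) {j j' : Fin d → Fin J} {x : Fin d → ℝ}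
    (h : x ∈ block d J j) (h' : x ∈ block d J j') : j = j' := by
  have hJ' : (0:ℝ) < J := by exact_mod_cast hJ
  funext k
  by_contra hne
  have key : ∀ (a b : Fin d → Fin J), x ∈ block d J a → x ∈ block d J b →
      (a k : ℕ) < (b k : ℕ) → False := by
    intro a b ha hb hab
    have hb0 : (b k : ℕ) ≠ 0 := by omega
    have h1 : ((b k : ℕ) : ℝ) / J < x k := by simpa [hb0] using (hb k).1
    have h2 : x k ≤ (((a k : ℕ) : ℝ) + 1) / J := (ha k).2
    have hc : (((a k : ℕ) : ℝ) + 1) ≤ ((b k : ℕ) : ℝ) := by exact_mod_cast hab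
    have h3 : (((a k : ℕ) : ℝ) + 1) / J ≤ ((b k : ℕ) : ℝ) / J :=
      (div_le_div_iff_of_pos_right hJ').mpr hc
    linarith
  rcases lt_trichotomy (j k : ℕ) (j' k : ℕ) with hlt | heq | hgt
  · exact key j j' h h' hlt
  · exact hne (Fin.ext heq)
  · exact key j' j h' h hgt

lemma exists_mem_cInt (hJ : 0 < J) {t : ℝ} (ht0 : 0 ≤ t) (ht1 : t ≤ 1) :
    ∃ m : Fin J, (if (m : ℕ) = 0 then (0:ℝ) ≤ t else ((m : ℕ) : ℝ) / J < t) ∧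
      t ≤ (((m : ℕ) : ℝ) + 1) / J := by
  have hJ' : (0:ℝ) < J := by exact_mod_cast hJ
  by_cases hle : t ≤ 1 / J
  · exact ⟨⟨0, hJ⟩, by simpa using ht0, by simpa using hle⟩
  · push_neg at hle
    set n : ℕ := ⌈t * J⌉₊ with hn
    have htJ : 1 < t * J := by
      rw [div_lt_iff₀ hJ'] at hle; linarith
    have hn2 : 2 ≤ n := by
      by_contra hc
      push_neg at hc
      interval_cases n <;>
        · have := Nat.le_ceil (t * J)
          rw [← hn] at this
          norm_num at this <;> linarith
    have hnJ : n ≤ J := by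
      rw [hn, Nat.ceil_le]
      nlinarith
    have h1n : (1:ℕ) ≤ n := by omega
    have hcast : ((n - 1 : ℕ) : ℝ) = (n : ℝ) - 1 := by
      push_cast [Nat.cast_sub h1n]; ring
    have hlt : (n : ℝ) < t * J + 1 := by
      have := Nat.ceil_lt_add_one (by positivity : (0:ℝ) ≤ t * J)
      rw [← hn] at this; linarith
    have hub : t * J ≤ (n : ℝ) := by
      have := Nat.le_ceil (t * J); rw [← hn] at this; exact this
    refine ⟨⟨n - 1, by omega⟩, ?_, ?_⟩
    · have h0 : (n - 1 : ℕ) ≠ 0 := by omega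
      show (if (n - 1 : ℕ) = 0 then (0:ℝ) ≤ t else ((n - 1 : ℕ) : ℝ) / J < t)
      simp only [h0, if_false, hcast]
      rw [div_lt_iff₀ hJ']
      linarith
    · show t ≤ (((n - 1 : ℕ) : ℝ) + 1) / J
      rw [le_div_iff₀ hJ', hcast]
      linarith

lemma exists_block (hJ : 0 < J) {x : Fin d → ℝ} (hx : x ∈ unitCube d) :
    ∃ j : Fin d → Fin J, x ∈ block d J j := by
  have h : ∀ k, ∃ m : Fin J, (if (m : ℕ) = 0 then (0:ℝ) ≤ x k else ((m : ℕ) : ℝ) / J < x k) ∧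
      x k ≤ (((m : ℕ) : ℝ) + 1) / J := fun k => exists_mem_cInt hJ (hx.1 k) (hx.2 k)
  choose j hj using h
  exact ⟨j, hj⟩

lemma cube_eq_iUnion (hJ : 0 < J) : unitCube d = ⋃ j : Fin d → Fin J, block d J j := by
  apply subset_antisymm
  · intro x hx
    rcases exists_block hJ hx with ⟨j, hj⟩
    exact Set.mem_iUnion.2 ⟨j, hj⟩
  · exact Set.iUnion_subset fun j => block_subset_cube hJ j

lemma pc_eq_on_block (hJ : 0 < J) (θ : (Fin d → Fin J) → ℝ) {j : Fin d → Fin J}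
    {x : Fin d → ℝ} (hx : x ∈ block d J j) : pc d J θ x = θ j := by
  unfold pc
  rw [Finset.sum_eq_single j]
  · simp [Set.indicator_of_mem hx]
  · intro j' _ hne
    apply Set.indicator_of_notMem
    exact fun hx' => hne (block_unique hJ hx' hx)
  · simp

/-- Monotonicity of the coefficient vector. -/
def Mvec (d J : ℕ) (η : (Fin d → Fin J) → ℝ) : Prop :=
  ∀ j j' : Fin d → Fin J, (∀ k, (j k : ℕ) ≤ (j' k : ℕ)) → η j ≤ η j'

lemma block_le (hJ : 0 < J) {j j' : Fin d → Fin J} {x y : Fin d → ℝ}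
    (hx : x ∈ block d J j) (hy : y ∈ block d J j') (hxy : x ≤ y) (k : Fin d) :
    (j k : ℕ) ≤ (j' k : ℕ) := by
  have hJ' : (0:ℝ) < J := by exact_mod_cast hJ
  by_contra hc
  push_neg at hc
  have hj0 : (j k : ℕ) ≠ 0 := by omega
  have h1 : ((j k : ℕ) : ℝ) / J < x k := by simpa [hj0] using (hx k).1
  have h2 : y k ≤ (((j' k : ℕ) : ℝ) + 1) / J := (hy k).2
  have hcast : (((j' k : ℕ) : ℝ) + 1) ≤ ((j k : ℕ) : ℝ) := by exact_mod_cast hc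
  have h3 : (((j' k : ℕ) : ℝ) + 1) / J ≤ ((j k : ℕ) : ℝ) / J :=
    (div_le_div_iff_of_pos_right hJ').mpr hcast
  have := hxy k
  linarith

/-- The top corner of a block. -/
def corner (d J : ℕ) (j : Fin d → Fin J) : Fin d → ℝ := fun k => (((j k : ℕ) : ℝ) + 1) / J

lemma corner_mem_block (hJ : 0 < J) (j : Fin d → Fin J) : corner d J j ∈ block d J j := by
  have hJ' : (0:ℝ) < J := by exact_mod_cast hJ
  intro k
  refine ⟨?_, le_refl _⟩
  by_cases h : (j k : ℕ) = 0
  · simp only [h, if_pos]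
    unfold corner
    positivity
  · simp only [h, if_neg, if_false]
    unfold corner
    apply (div_lt_div_iff_of_pos_right hJ').mpr
    linarith

lemma mvec_iff (hJ : 0 < J) (η : (Fin d → Fin J) → ℝ) :
    MonOn d (pc d J η) ↔ Mvec d J η := by
  constructor
  · intro hmon j j' hle
    have hx := corner_mem_block hJ j
    have hy := corner_mem_block hJ j'
    have hcle : corner d J j ≤ corner d J j' := by
      intro k
      unfold corner
      have : ((j k : ℕ) : ℝ) ≤ ((j' k : ℕ) : ℝ) := by exact_mod_cast hle k
      have hJ' : (0:ℝ) < J := by exact_mod_cast hJ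
      apply (div_le_div_iff_of_pos_right hJ').mpr
      linarith
    have := hmon _ (block_subset_cube hJ j hx) _ (block_subset_cube hJ j' hy) hcle
    rwa [pc_eq_on_block hJ η hx, pc_eq_on_block hJ η hy] at this
  · intro hv x hx y hy hxy
    rcases exists_block hJ hx with ⟨j, hj⟩
    rcases exists_block hJ hy with ⟨j', hj'⟩
    rw [pc_eq_on_block hJ η hj, pc_eq_on_block hJ η hj']
    exact hv j j' (block_le hJ hj hj' hxy)

lemma measurable_pc (θ : (Fin d → Fin J) → ℝ) : Measurable (pc d J θ) := by
  unfold pc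
  exact Finset.measurable_sum _ fun j _ =>
    Measurable.indicator measurable_const (measurableSet_block j)

lemma pc_abs_le (θ : (Fin d → Fin J) → ℝ) (x : Fin d → ℝ) :
    |pc d J θ x| ≤ ∑ j : Fin d → Fin J, |θ j| := by
  refine le_trans (Finset.abs_sum_le_sum_abs _ _) (Finset.sum_le_sum fun j _ => ?_)
  by_cases h : x ∈ block d J j
  · simp [Set.indicator_of_mem h]
  · simp [Set.indicator_of_notMem h, abs_nonneg]

lemma continuous_abs_rpow (c : ℝ) {p : ℝ} (hp : 0 ≤ p) :
    Continuous fun t : ℝ => |c - t| ^ p :=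
  (continuous_iff_continuousAt.2 fun x =>
    Real.continuousAt_rpow_const x p (Or.inr hp)).comp
    ((continuous_const.sub continuous_id).abs)

lemma convexOn_abs_sub (c : ℝ) : ConvexOn ℝ Set.univ fun t : ℝ => |c - t| := by
  refine ⟨convex_univ, fun x _ y _ a b ha hb hab => ?_⟩
  simp only [smul_eq_mul]
  have key : c - (a * x + b * y) = a * (c - x) + b * (c - y) := by
    linear_combination (-c) * hab
  rw [key]
  calc |a * (c - x) + b * (c - y)| ≤ |a * (c - x)| + |b * (c - y)| := abs_add_le _ _
    _ = a * |c - x| + b * |c - y| := by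
        rw [abs_mul, abs_mul, abs_of_nonneg ha, abs_of_nonneg hb]

lemma convexOn_abs_rpow (c : ℝ) {p : ℝ} (hp : 1 ≤ p) :
    ConvexOn ℝ Set.univ fun t : ℝ => |c - t| ^ p := by
  refine ⟨convex_univ, fun x hx y hy a b ha hb hab => ?_⟩
  have h1 := (convexOn_abs_sub c).2 hx hy ha hb hab
  simp only [smul_eq_mul] at h1 ⊢
  have h2 : |c - (a * x + b * y)| ^ p ≤ (a * |c - x| + b * |c - y|) ^ p :=
    Real.rpow_le_rpow (abs_nonneg _) h1 (by linarith)
  refine le_trans h2 ?_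
  have h3 := (convexOn_rpow hp).2 (Set.mem_Ici.2 (abs_nonneg (c - x)))
    (Set.mem_Ici.2 (abs_nonneg (c - y))) ha hb hab
  simpa [smul_eq_mul] using h3

lemma monotone_aemeasurable {g : (Fin d → ℝ) → ℝ} (hg : Monotone g) :
    AEMeasurable g (volume : Measure (Fin d → ℝ)) := by
  have hnm : NullMeasurable g (volume : Measure (Fin d → ℝ)) := by
    refine (measurable_of_Ioi fun c => ?_ :
      @Measurable (NullMeasurableSpace (Fin d → ℝ) volume) ℝ _ _ g)
    have hup : IsUpperSet (g ⁻¹' Set.Ioi c) := fun x y hxy hx =>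
      lt_of_lt_of_le hx (hg hxy)
    exact hup.ordConnected.nullMeasurableSet
  exact hnm.aemeasurable

def clampCube (d : ℕ) (x : Fin d → ℝ) : Fin d → ℝ := fun k => max 0 (min 1 (x k))

lemma clampCube_mem (x : Fin d → ℝ) : clampCube d x ∈ Set.Icc (0 : Fin d → ℝ) 1 := by
  refine ⟨fun k => le_max_left _ _, fun k => ?_⟩
  show max 0 (min 1 (x k)) ≤ 1
  exact max_le zero_le_one (min_le_left _ _)

lemma clampCube_monotone : Monotone (clampCube d) := fun x y hxy k => by
  exact max_le_max le_rfl (min_le_min le_rfl (hxy k))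

lemma clampCube_eq_self {x : Fin d → ℝ} (hx : x ∈ Set.Icc (0 : Fin d → ℝ) 1) :
    clampCube d x = x := by
  funext k
  have h0 := hx.1 k
  have h1 := hx.2 k
  have h0' : (0:ℝ) ≤ x k := h0
  have h1' : x k ≤ 1 := h1
  simp only [clampCube]
  rw [min_eq_right h1', max_eq_right h0']

def Obox (d J : ℕ) (j : Fin d → Fin J) : Set (Fin d → ℝ) :=
  Set.pi Set.univ fun k => Set.Ioo (((j k : ℕ) : ℝ) / J) ((((j k : ℕ) : ℝ) + 1) / J)

def Cbox (d J : ℕ) (j : Fin d → Fin J) : Set (Fin d → ℝ) :=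
  Set.pi Set.univ fun k => Set.Icc (((j k : ℕ) : ℝ) / J) ((((j k : ℕ) : ℝ) + 1) / J)

lemma measurableSet_Obox (j : Fin d → Fin J) : MeasurableSet (Obox d J j) :=
  MeasurableSet.univ_pi fun _ => measurableSet_Ioo

lemma measurableSet_Cbox (j : Fin d → Fin J) : MeasurableSet (Cbox d J j) :=
  MeasurableSet.univ_pi fun _ => measurableSet_Icc

lemma volume_Obox (hJ : 0 < J) (j : Fin d → Fin J) :
    volume (Obox d J j) = ENNReal.ofReal ((1 / J : ℝ) ^ d) := by
  have hJ' : (0:ℝ) < J := by exact_mod_cast hJ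
  rw [Obox, volume_pi_pi]
  have : ∀ k, volume (Set.Ioo (((j k : ℕ) : ℝ) / J) ((((j k : ℕ) : ℝ) + 1) / J))
      = ENNReal.ofReal (1 / J) := by
    intro k
    rw [Real.volume_Ioo]
    congr 1
    field_simp
    ring
  simp only [this]
  rw [Finset.prod_const, ← ENNReal.ofReal_pow (by positivity)]
  simp

lemma volume_Cbox (hJ : 0 < J) (j : Fin d → Fin J) :
    volume (Cbox d J j) = ENNReal.ofReal ((1 / J : ℝ) ^ d) := by
  have hJ' : (0:ℝ) < J := by exact_mod_cast hJ
  rw [Cbox, volume_pi_pi]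
  have : ∀ k, volume (Set.Icc (((j k : ℕ) : ℝ) / J) ((((j k : ℕ) : ℝ) + 1) / J))
      = ENNReal.ofReal (1 / J) := by
    intro k
    rw [Real.volume_Icc]
    congr 1
    field_simp
    ring
  simp only [this]
  rw [Finset.prod_const, ← ENNReal.ofReal_pow (by positivity)]
  simp

lemma Obox_subset_block (j : Fin d → Fin J) : Obox d J j ⊆ block d J j := by
  intro x hx k
  have hk := hx k (Set.mem_univ k)
  rcases hk with ⟨h1, h2⟩
  refine ⟨?_, le_of_lt h2⟩
  by_cases h : (j k : ℕ) = 0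
  · simp only [h, if_pos]
    have : ((0:ℕ) : ℝ) / J = 0 := by simp
    rw [h] at h1
    simp only [Nat.cast_zero] at h1
    have h0 : (0:ℝ) / J = 0 := by simp
    rw [h0] at h1
    exact le_of_lt h1
  · simp only [h, if_neg, if_false]
    exact h1

lemma block_subset_Cbox (j : Fin d → Fin J) : block d J j ⊆ Cbox d J j := by
  intro x hx k _
  rcases hx k with ⟨h1, h2⟩
  refine ⟨?_, h2⟩
  by_cases h : (j k : ℕ) = 0
  · simp only [h, if_pos] at h1
    simp only [h, Nat.cast_zero, zero_div]
    exact h1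
  · simp only [h, if_false] at h1
    exact le_of_lt h1

lemma block_ae_Obox (hJ : 0 < J) (j : Fin d → Fin J) :
    block d J j =ᵐ[volume] Obox d J j := by
  have hsub1 := Obox_subset_block (d := d) (J := J) j
  have hsub2 := block_subset_Cbox (d := d) (J := J) j
  have hOC : Obox d J j ⊆ Cbox d J j := hsub1.trans hsub2
  have hnull : volume (Cbox d J j \ Obox d J j) = 0 := by
    rw [measure_diff hOC (measurableSet_Obox j).nullMeasurableSet
      ((volume_Obox hJ j).trans_ne ENNReal.ofReal_ne_top),
      volume_Obox hJ j, volume_Cbox hJ j, tsub_self]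
  rw [Filter.eventuallyEq_set]
  have h1 : volume (block d J j \ Obox d J j) = 0 :=
    measure_mono_null (Set.diff_subset_diff_left hsub2) hnull
  have h2 : volume (Obox d J j \ block d J j) = 0 := by
    rw [Set.diff_eq_empty.2 hsub1]; exact measure_empty
  have := MeasureTheory.ae_eq_set.2 ⟨h1, by simpa using h2⟩
  rwa [Filter.eventuallyEq_set] at this

lemma integrableOn_of_bdd {s : Set (Fin d → ℝ)} (hs : volume s ≠ ⊤) {g : (Fin d → ℝ) → ℝ}
    (hg : AEMeasurable g (volume.restrict s)) {C : ℝ} (hC : ∀ x, |g x| ≤ C) :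
    IntegrableOn g s volume := by
  refine Integrable.mono' (g := fun _ => C) ?_ hg.aestronglyMeasurable
    (Filter.Eventually.of_forall fun x => by simpa using hC x)
  exact integrableOn_const hs

lemma preimage_add_Obox (hJ : 0 < J) (j j' : Fin d → Fin J)
    (v : Fin d → ℝ) (hv : v = fun k => (((j' k : ℕ) : ℝ) - ((j k : ℕ) : ℝ)) / J) :
    (fun x : Fin d → ℝ => x + v) ⁻¹' Obox d J j' = Obox d J j := by
  have hJ' : (0:ℝ) < J := by exact_mod_cast hJ
  ext x
  simp only [Set.mem_preimage, Obox, Set.mem_pi, Set.mem_univ, forall_true_left,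
    Set.mem_Ioo, Pi.add_apply, hv]
  refine forall_congr' fun k => ?_
  have hdiv : (((j' k : ℕ) : ℝ) - ((j k : ℕ) : ℝ)) / J * J
      = ((j' k : ℕ) : ℝ) - ((j k : ℕ) : ℝ) := div_mul_cancel₀ _ (ne_of_gt hJ')
  rw [div_lt_iff₀ hJ', div_lt_iff₀ hJ', lt_div_iff₀ hJ', lt_div_iff₀ hJ']
  constructor <;> rintro ⟨h1, h2⟩ <;>
    exact ⟨by nlinarith [hdiv, h1], by nlinarith [hdiv, h2]⟩

lemma setIntegral_block_mono (hJ : 0 < J) {g : (Fin d → ℝ) → ℝ} (hg : Monotone g)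
    (hmeas : AEMeasurable g (volume : Measure (Fin d → ℝ))) {C : ℝ} (hC : ∀ x, |g x| ≤ C)
    {j j' : Fin d → Fin J} (hle : ∀ k, (j k : ℕ) ≤ (j' k : ℕ)) :
    ∫ x in block d J j, g x ≤ ∫ x in block d J j', g x := by
  have hJ' : (0:ℝ) < J := by exact_mod_cast hJ
  set v : Fin d → ℝ := fun k => (((j' k : ℕ) : ℝ) - ((j k : ℕ) : ℝ)) / J with hv
  have hv0 : (0 : Fin d → ℝ) ≤ v := by
    intro k
    have : ((j k : ℕ) : ℝ) ≤ ((j' k : ℕ) : ℝ) := by exact_mod_cast hle k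
    show (0:ℝ) ≤ (((j' k : ℕ) : ℝ) - ((j k : ℕ) : ℝ)) / J
    exact div_nonneg (by linarith) hJ'.le
  have hmap : Measure.map (fun x : Fin d → ℝ => x + v) (volume.restrict (Obox d J j))
      = volume.restrict (Obox d J j') := by
    conv_lhs => rw [← preimage_add_Obox hJ j j' v hv]
    rw [← Measure.restrict_map (measurable_add_const v) (measurableSet_Obox j'),
      map_add_right_eq_self]
  have hO : volume (Obox d J j) ≠ ⊤ := (volume_Obox hJ j).trans_ne ENNReal.ofReal_ne_top
  have hO' : volume (Obox d J j') ≠ ⊤ := (volume_Obox hJ j').trans_ne ENNReal.ofReal_ne_top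
  have hmeas' : AEMeasurable g (volume.restrict (Obox d J j')) := hmeas.restrict
  have hgv : AEMeasurable (fun x => g (x + v)) (volume.restrict (Obox d J j)) := by
    have h1 : AEMeasurable g
        (Measure.map (fun x : Fin d → ℝ => x + v) (volume.restrict (Obox d J j))) := by
      rw [hmap]; exact hmeas'
    exact h1.comp_aemeasurable (measurable_add_const v).aemeasurable
  calc ∫ x in block d J j, g x = ∫ x in Obox d J j, g x :=
        setIntegral_congr_set (block_ae_Obox hJ j)
    _ ≤ ∫ x in Obox d J j, g (x + v) := by
        refine setIntegral_mono_on ?_ ?_ (measurableSet_Obox j) fun x _ => ?_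
        · exact integrableOn_of_bdd hO hmeas.restrict hC
        · exact integrableOn_of_bdd hO hgv (fun x => hC (x + v))
        · exact hg (le_add_of_nonneg_right hv0)
    _ = ∫ x in Obox d J j', g x := by
        rw [← hmap, integral_map (measurable_add_const v).aemeasurable]
        rw [hmap]
        exact hmeas'.aestronglyMeasurable
    _ = ∫ x in block d J j', g x := (setIntegral_congr_set (block_ae_Obox hJ j')).symm


lemma pairwise_disjoint_block (hJ : 0 < J) :
    Pairwise (Function.onFun Disjoint fun j : Fin d → Fin J => block d J j) := by
  intro j j' hne
  exact Set.disjoint_left.2 fun x hx hx' => hne (block_unique hJ hx hx')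

lemma integral_cube_eq_sum (hJ : 0 < J) {F : (Fin d → ℝ) → ℝ}
    (hF : IntegrableOn F (unitCube d)) :
    ∫ x in unitCube d, F x = ∑ j : Fin d → Fin J, ∫ x in block d J j, F x := by
  rw [cube_eq_iUnion hJ (d := d) (J := J)] at hF ⊢
  rw [integral_iUnion measurableSet_block (pairwise_disjoint_block hJ) hF, tsum_fintype]

lemma jensen_block (hJ : 0 < J) {p : ℝ} (hp : 1 ≤ p) (c : ℝ) {g : (Fin d → ℝ) → ℝ}
    (hgm : AEMeasurable g (volume : Measure (Fin d → ℝ))) {C : ℝ} (hC : ∀ x, |g x| ≤ C)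
    (j : Fin d → Fin J) :
    |c - (∫ x in block d J j, g x) / (volume (block d J j)).toReal| ^ p * (1 / J : ℝ) ^ d
      ≤ ∫ x in block d J j, |c - g x| ^ p := by
  have hvol := volume_block hJ j
  have hvpos : (0:ℝ) < (1 / J : ℝ) ^ d := by positivity
  have h0 : volume (block d J j) ≠ 0 := by
    rw [hvol]; simpa using (ENNReal.ofReal_pos.2 hvpos).ne'
  have ht : volume (block d J j) ≠ ⊤ := hvol.trans_ne ENNReal.ofReal_ne_top
  have htr : (volume (block d J j)).toReal = (1 / J : ℝ) ^ d := volume_block_toReal hJ j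
  have hfi : IntegrableOn g (block d J j) volume := integrableOn_of_bdd ht hgm.restrict hC
  have hbound : ∀ x, |(|c - g x| ^ p)| ≤ (|c| + C) ^ p := by
    intro x
    rw [abs_of_nonneg (Real.rpow_nonneg (abs_nonneg _) p)]
    refine Real.rpow_le_rpow (abs_nonneg _) ?_ (by linarith)
    calc |c - g x| ≤ |c| + |g x| := abs_sub _ _
      _ ≤ |c| + C := by linarith [hC x]
  have hgi : IntegrableOn (fun x => |c - g x| ^ p) (block d J j) volume := by
    refine integrableOn_of_bdd ht ?_ hbound
    exact ((continuous_abs_rpow c (by linarith)).measurable.comp_aemeasurable hgm).restrict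
  have hjen := (convexOn_abs_rpow c hp).map_set_average_le
    (continuous_abs_rpow c (by linarith : (0:ℝ) ≤ p)).continuousOn isClosed_univ h0 ht
    (Filter.Eventually.of_forall fun x => Set.mem_univ _) hfi hgi
  rw [setAverage_eq, setAverage_eq, measureReal_def, htr] at hjen
  simp only [smul_eq_mul] at hjen
  have hdiv : (∫ x in block d J j, g x) / (1 / J : ℝ) ^ d
      = ((1 / J : ℝ) ^ d)⁻¹ * ∫ x in block d J j, g x := by
    rw [div_eq_inv_mul]
  rw [htr, hdiv]
  calc |c - ((1 / J : ℝ) ^ d)⁻¹ * ∫ x in block d J j, g x| ^ p * (1 / J : ℝ) ^ d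
      ≤ (((1 / J : ℝ) ^ d)⁻¹ * ∫ x in block d J j, |c - g x| ^ p) * (1 / J : ℝ) ^ d := by
        exact mul_le_mul_of_nonneg_right hjen hvpos.le
    _ = ∫ x in block d J j, |c - g x| ^ p := by
        field_simp


lemma continuous_abs_rpow' {p : ℝ} (hp : 0 ≤ p) : Continuous fun t : ℝ => |t| ^ p := by
  have := continuous_abs_rpow 0 hp
  simpa [zero_sub, abs_neg] using this

lemma volume_cube_ne_top : volume (unitCube d) ≠ ⊤ := by
  rw [unitCube]
  exact isCompact_Icc.measure_lt_top.ne

lemma integrableOn_cube_abs_rpow {p : ℝ} (hp : 0 ≤ p) (θ : (Fin d → Fin J) → ℝ)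
    {g : (Fin d → ℝ) → ℝ} (hgm : AEMeasurable g (volume : Measure (Fin d → ℝ)))
    {C : ℝ} (hC : ∀ x, |g x| ≤ C) {s : Set (Fin d → ℝ)} (hs : volume s ≠ ⊤) :
    IntegrableOn (fun x => |pc d J θ x - g x| ^ p) s volume := by
  have hsub : AEMeasurable (fun x => pc d J θ x - g x) (volume : Measure (Fin d → ℝ)) :=
    (measurable_pc θ).aemeasurable.sub hgm
  have hm : AEMeasurable (fun x => |pc d J θ x - g x| ^ p)
      (volume : Measure (Fin d → ℝ)) :=
    (continuous_abs_rpow' hp).measurable.comp_aemeasurable hsub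
  refine integrableOn_of_bdd hs hm.restrict (C := (∑ j : Fin d → Fin J, |θ j| + C) ^ p) ?_
  intro x
  rw [abs_of_nonneg (Real.rpow_nonneg (abs_nonneg _) p)]
  refine Real.rpow_le_rpow (abs_nonneg _) ?_ hp
  calc |pc d J θ x - g x| ≤ |pc d J θ x| + |g x| := abs_sub _ _
    _ ≤ ∑ j : Fin d → Fin J, |θ j| + C := add_le_add (pc_abs_le θ x) (hC x)

lemma pc_dist_integral (hJ : 0 < J) {p : ℝ} (hp : 1 ≤ p)
    (θ η : (Fin d → Fin J) → ℝ) :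
    (∫ x in unitCube d, |pc d J θ x - pc d J η x| ^ p)
      = ∑ j : Fin d → Fin J, |θ j - η j| ^ p * (1 / J : ℝ) ^ d := by
  have hp0 : (0:ℝ) ≤ p := by linarith
  have hint : IntegrableOn (fun x => |pc d J θ x - pc d J η x| ^ p) (unitCube d) volume :=
    integrableOn_cube_abs_rpow hp0 θ (measurable_pc η).aemeasurable (pc_abs_le η)
      volume_cube_ne_top
  rw [integral_cube_eq_sum hJ hint]
  refine Finset.sum_congr rfl fun j _ => ?_
  have hcongr : ∀ x ∈ block d J j, |pc d J θ x - pc d J η x| ^ p = |θ j - η j| ^ p := by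
    intro x hx
    rw [pc_eq_on_block hJ θ hx, pc_eq_on_block hJ η hx]
  rw [setIntegral_congr_fun (measurableSet_block j) hcongr, setIntegral_const,
    measureReal_def, volume_block_toReal hJ j, smul_eq_mul, mul_comm]

/-- Key lemma: for every coordinatewise monotone `h` there is a monotone coefficient
vector whose piecewise-constant function is at least as close to `pc θ` in `L^p`. -/
lemma key_lemma (hJ : 0 < J) {p : ℝ} (hp : 1 ≤ p) (θ : (Fin d → Fin J) → ℝ)
    {h : (Fin d → ℝ) → ℝ} (hh : MonOn d h) :
    ∃ η' : (Fin d → Fin J) → ℝ, Mvec d J η' ∧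
      (∫ x in unitCube d, |pc d J θ x - pc d J η' x| ^ p)
        ≤ ∫ x in unitCube d, |pc d J θ x - h x| ^ p := by
  have hp0 : (0:ℝ) ≤ p := by linarith
  set g : (Fin d → ℝ) → ℝ := fun x => h (clampCube d x) with hg
  have hgmono : Monotone g := by
    intro x y hxy
    exact hh _ (clampCube_mem x) _ (clampCube_mem y) (clampCube_monotone hxy)
  set C : ℝ := max |h 0| |h 1| with hCdef
  have hC : ∀ x, |g x| ≤ C := by
    intro x
    have h0 : (0 : Fin d → ℝ) ∈ unitCube d := by
      constructor <;> intro k <;> simp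
    have h1 : (1 : Fin d → ℝ) ∈ unitCube d := by
      constructor <;> intro k <;> simp
    have hcm := clampCube_mem x
    have hlb := hh _ h0 _ hcm hcm.1
    have hub := hh _ hcm _ h1 hcm.2
    rw [abs_le]
    constructor
    · have : -|h 0| ≤ h 0 := neg_abs_le _
      have h2 : -C ≤ -|h 0| := neg_le_neg (le_max_left _ _)
      exact le_trans (le_trans h2 this) hlb
    · exact le_trans hub (le_trans (le_abs_self _) (le_max_right _ _))
  have hgm : AEMeasurable g (volume : Measure (Fin d → ℝ)) := monotone_aemeasurable hgmono
  set η' : (Fin d → Fin J) → ℝ :=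
    fun j => (∫ x in block d J j, g x) / (volume (block d J j)).toReal with hη'
  have hvpos : (0:ℝ) < (1 / J : ℝ) ^ d := by positivity
  have hMvec : Mvec d J η' := by
    intro j j' hle
    have hmono := setIntegral_block_mono hJ hgmono hgm hC hle
    rw [hη']
    simp only
    rw [volume_block_toReal hJ j, volume_block_toReal hJ j']
    gcongr
  refine ⟨η', hMvec, ?_⟩
  have hcubeMeas : MeasurableSet (unitCube d) := by
    rw [unitCube]; exact measurableSet_Icc
  rw [pc_dist_integral hJ hp θ η']
  calc ∑ j : Fin d → Fin J, |θ j - η' j| ^ p * (1 / J : ℝ) ^ d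
      ≤ ∑ j : Fin d → Fin J, ∫ x in block d J j, |θ j - g x| ^ p := by
        refine Finset.sum_le_sum fun j _ => ?_
        exact jensen_block hJ hp (θ j) hgm hC j
    _ = ∑ j : Fin d → Fin J, ∫ x in block d J j, |pc d J θ x - g x| ^ p := by
        refine Finset.sum_congr rfl fun j _ => ?_
        refine setIntegral_congr_fun (measurableSet_block j) fun x hx => ?_
        rw [pc_eq_on_block hJ θ hx]
    _ = ∫ x in unitCube d, |pc d J θ x - g x| ^ p :=
        (integral_cube_eq_sum hJ
          (integrableOn_cube_abs_rpow hp0 θ hgm hC volume_cube_ne_top)).symm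
    _ = ∫ x in unitCube d, |pc d J θ x - h x| ^ p := by
        refine setIntegral_congr_fun hcubeMeas fun x hx => ?_
        rw [hg]
        simp only
        rw [clampCube_eq_self hx]


lemma clamp_dist {m M t c : ℝ} (hc1 : m ≤ c) (hc2 : c ≤ M) :
    |c - max m (min M t)| ≤ |c - t| := by
  rcases le_total t m with h | h
  · have hmM : m ≤ M := le_trans hc1 hc2
    rw [min_eq_right (le_trans h hmM), max_eq_left h]
    rw [abs_of_nonneg (by linarith)]
    exact le_trans (by linarith) (le_abs_self (c - t))
  · rcases le_total t M with h2 | h2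
    · rw [min_eq_right h2, max_eq_right h]
    · have hmM : m ≤ M := le_trans hc1 hc2
      rw [min_eq_left h2, max_eq_right hmM]
      rw [abs_of_nonpos (by linarith)]
      have hna : -(c - t) ≤ |c - t| := neg_le_abs _
      linarith

lemma exists_min_vec (hJ : 0 < J) {p : ℝ} (hp : 1 ≤ p) (θ : (Fin d → Fin J) → ℝ) :
    ∃ η : (Fin d → Fin J) → ℝ, Mvec d J η ∧
      ∀ η' : (Fin d → Fin J) → ℝ, Mvec d J η' →
        (∑ j : Fin d → Fin J, |θ j - η j| ^ p) ≤ ∑ j : Fin d → Fin J, |θ j - η' j| ^ p := by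
  have hp0 : (0:ℝ) ≤ p := by linarith
  haveI : Nonempty (Fin J) := ⟨⟨0, hJ⟩⟩
  haveI : Nonempty (Fin d → Fin J) := ⟨fun _ => ⟨0, hJ⟩⟩
  have huniv : (Finset.univ : Finset (Fin d → Fin J)).Nonempty := Finset.univ_nonempty
  set m : ℝ := Finset.univ.inf' huniv θ with hm
  set M : ℝ := Finset.univ.sup' huniv θ with hM
  have hθmem : ∀ j, m ≤ θ j ∧ θ j ≤ M := fun j =>
    ⟨Finset.inf'_le θ (Finset.mem_univ j), Finset.le_sup' θ (Finset.mem_univ j)⟩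
  have hmM : m ≤ M := le_trans (hθmem Classical.ofNonempty).1 (hθmem Classical.ofNonempty).2
  set G : ((Fin d → Fin J) → ℝ) → ℝ := fun η => ∑ j : Fin d → Fin J, |θ j - η j| ^ p with hG
  have hGcont : Continuous G := by
    refine continuous_finset_sum _ fun j _ => ?_
    exact (continuous_abs_rpow (θ j) hp0).comp (continuous_apply j)
  set K : Set ((Fin d → Fin J) → ℝ) :=
    {η | Mvec d J η} ∩ Set.Icc (fun _ => m) (fun _ => M) with hK
  have hKne : K.Nonempty := by
    refine ⟨fun _ => m, fun j j' _ => le_refl m, fun j => le_refl m, fun j => hmM⟩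
  have hKclosed : IsClosed {η : (Fin d → Fin J) → ℝ | Mvec d J η} := by
    have : {η : (Fin d → Fin J) → ℝ | Mvec d J η} =
        ⋂ (jp : (Fin d → Fin J) × (Fin d → Fin J))
          (_ : ∀ k, (jp.1 k : ℕ) ≤ (jp.2 k : ℕ)), {η | η jp.1 ≤ η jp.2} := by
      ext η
      simp only [Set.mem_setOf_eq, Set.mem_iInter, Mvec]
      constructor
      · intro hmv jp hjp
        exact hmv jp.1 jp.2 hjp
      · intro hmv j j' hle
        exact hmv (j, j') hle
    rw [this]
    exact isClosed_iInter fun jp => isClosed_iInter fun _ =>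
      isClosed_le (continuous_apply _) (continuous_apply _)
  have hKcomp : IsCompact K := IsCompact.inter_left isCompact_Icc hKclosed
  obtain ⟨η, hηK, hηmin⟩ := hKcomp.exists_isMinOn hKne hGcont.continuousOn
  refine ⟨η, hηK.1, fun η' hη' => ?_⟩
  set η'' : (Fin d → Fin J) → ℝ := fun j => max m (min M (η' j)) with hη''
  have hη''K : η'' ∈ K := by
    refine ⟨fun j j' hle => ?_, fun j => le_max_left _ _, fun j => max_le hmM (min_le_left _ _)⟩
    exact max_le_max (le_refl m) (min_le_min (le_refl M) (hη' j j' hle))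
  have h1 : G η ≤ G η'' := hηmin hη''K
  have h2 : G η'' ≤ G η' := by
    refine Finset.sum_le_sum fun j _ => ?_
    refine Real.rpow_le_rpow (abs_nonneg _) ?_ hp0
    exact clamp_dist (hθmem j).1 (hθmem j).2
  exact le_trans h1 h2

end LpProj

open LpProj in
/-- The L^p(λ) projection of a piecewise constant function onto the monotone class exists,
can be taken piecewise constant, and any monotone piecewise constant minimizer achieves the
infimum over all monotone functions. -/
theorem Lp_projection_piecewise (d J : ℕ) (hJ : 0 < J) (p : ℝ) (hp : 1 ≤ p)
    (θ : (Fin d → Fin J) → ℝ) :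
    (∃ η : (Fin d → Fin J) → ℝ, MonOn d (pc d J η) ∧
        ∀ h : (Fin d → ℝ) → ℝ, MonOn d h →
          (∫ x in unitCube d, |pc d J θ x - pc d J η x| ^ p) ≤
            ∫ x in unitCube d, |pc d J θ x - h x| ^ p) ∧
    (∀ η : (Fin d → Fin J) → ℝ, MonOn d (pc d J η) →
        (∀ η' : (Fin d → Fin J) → ℝ, MonOn d (pc d J η') →
          (∫ x in unitCube d, |pc d J θ x - pc d J η x| ^ p) ≤
            ∫ x in unitCube d, |pc d J θ x - pc d J η' x| ^ p) →
        ∀ h : (Fin d → ℝ) → ℝ, MonOn d h →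
          (∫ x in unitCube d, |pc d J θ x - pc d J η x| ^ p) ≤
            ∫ x in unitCube d, |pc d J θ x - h x| ^ p) := by
  constructor
  · obtain ⟨η, hηM, hηmin⟩ := exists_min_vec hJ hp θ
    refine ⟨η, (mvec_iff hJ η).2 hηM, fun h hh => ?_⟩
    obtain ⟨η', hη'M, hle⟩ := key_lemma hJ hp θ hh
    refine le_trans ?_ hle
    rw [pc_dist_integral hJ hp θ η, pc_dist_integral hJ hp θ η']
    rw [← Finset.sum_mul, ← Finset.sum_mul]
    exact mul_le_mul_of_nonneg_right (hηmin η' hη'M) (by positivity)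
  · intro η hη hmin h hh
    obtain ⟨η', hη'M, hle⟩ := key_lemma hJ hp θ hh
    exact le_trans (hmin η' ((mvec_iff hJ η').2 hη'M)) hle
end
end

section
/- Let f : [0,1]^d → ℝ be coordinatewise nondecreasing. For each multi-index j ∈ {1,...,J}^d pick θ_j between f((j-1⃗)/J) and f(j/J), and define f_J = Σ_j θ_j 1_{I_j}. Then for any probability measure G* on [0,1]^d with max_j G*(I_j) ≤ C/J^d, one has ||f - f_J||_{1,G*} ≤ C' · d · (f(1⃗) - f(0⃗)) / J for a constant C' depending only on C. -/
open MeasureTheory Real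

noncomputable section

lemma block_measurable (d J : ℕ) (j : Fin d → Fin J) : MeasurableSet (block d J j) := by
  have : block d J j = ⋂ k, ((fun x : Fin d → ℝ => x k) ⁻¹'
      (if (j k : ℕ) = 0 then Set.Icc (0:ℝ) ((((j k : ℕ) : ℝ) + 1) / J)
       else Set.Ioc (((j k : ℕ) : ℝ) / J) ((((j k : ℕ) : ℝ) + 1) / J))) := by
    ext x
    simp only [block, Set.mem_setOf_eq, Set.mem_iInter, Set.mem_preimage]
    refine forall_congr' fun k => ?_
    by_cases h : (j k : ℕ) = 0 <;> simp [h, Set.mem_Icc, Set.mem_Ioc]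
  rw [this]
  refine MeasurableSet.iInter fun k => ?_
  by_cases h : (j k : ℕ) = 0 <;> simp only [h, if_true, if_false] <;>
    exact (measurable_pi_apply k) (by measurability)

-- single coordinate uniqueness
lemma coord_unique {J : ℕ} (m m' : Fin J) (t : ℝ)
    (h1 : (if (m : ℕ) = 0 then (0:ℝ) ≤ t else ((m : ℕ) : ℝ) / J < t) ∧ t ≤ (((m : ℕ) : ℝ) + 1) / J)
    (h2 : (if (m' : ℕ) = 0 then (0:ℝ) ≤ t else ((m' : ℕ) : ℝ) / J < t) ∧ t ≤ (((m' : ℕ) : ℝ) + 1) / J) :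
    m = m' := by
  have hJ : (0:ℝ) < J := by exact_mod_cast Nat.pos_of_ne_zero (by rintro rfl; exact m.elim0)
  by_contra hne
  wlog hlt : (m : ℕ) < (m' : ℕ) generalizing m m'
  · have hv : (m : ℕ) ≠ (m' : ℕ) := fun h => hne (Fin.ext h)
    exact this m' m h2 h1 (Ne.symm hne) (by omega)
  have hm'0 : (m' : ℕ) ≠ 0 := by omega
  rw [if_neg hm'0] at h2
  have : (((m' : ℕ) : ℝ)) / J < t := h2.1
  have h3 : t ≤ (((m : ℕ) : ℝ) + 1) / J := h1.2
  have : (((m' : ℕ) : ℝ)) / J < (((m : ℕ) : ℝ) + 1) / J := lt_of_lt_of_le this h3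
  have := (div_lt_div_iff_of_pos_right hJ).mp this
  have : ((m' : ℕ) : ℝ) < (m : ℕ) + 1 := by exact_mod_cast this
  have : (m' : ℕ) < (m : ℕ) + 1 := by exact_mod_cast this
  omega

/-- index of the block interval containing `t`. -/
def idx1 (J : ℕ) (t : ℝ) : ℕ := (⌈t * J⌉ - 1).toNat

lemma idx1_lt {J : ℕ} (hJ : 0 < J) {t : ℝ} (h0 : 0 ≤ t) (h1 : t ≤ 1) : idx1 J t < J := by
  have hJR : (0:ℝ) < J := by exact_mod_cast hJ
  have : t * J ≤ J := by nlinarith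
  have hc : ⌈t * (J:ℝ)⌉ ≤ (J:ℤ) := Int.ceil_le.mpr (by exact_mod_cast this)
  unfold idx1
  omega

lemma idx1_mem {J : ℕ} (hJ : 0 < J) {t : ℝ} (h0 : 0 ≤ t) (h1 : t ≤ 1) :
    (if idx1 J t = 0 then (0:ℝ) ≤ t else ((idx1 J t : ℕ) : ℝ) / J < t) ∧
      t ≤ ((idx1 J t : ℝ) + 1) / J := by
  have hJR : (0:ℝ) < J := by exact_mod_cast hJ
  set c : ℤ := ⌈t * J⌉ with hc
  have hle : t * J ≤ c := Int.le_ceil _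
  have hgt : (c : ℝ) - 1 < t * J := by
    have := Int.ceil_lt_add_one (t * (J:ℝ))
    linarith [Int.sub_one_lt_floor (t*(J:ℝ))]
  constructor
  · by_cases h : idx1 J t = 0
    · simpa [h] using h0
    · rw [if_neg h]
      have hcpos : 1 ≤ c - 1 := by unfold idx1 at h; omega
      have hidx : ((idx1 J t : ℕ) : ℝ) = (c : ℝ) - 1 := by
        unfold idx1; rw [← hc]
        have hz : ((c - 1).toNat : ℤ) = c - 1 := Int.toNat_of_nonneg (by omega)
        exact_mod_cast hz
      rw [hidx, div_lt_iff₀ hJR]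
      linarith
  · by_cases h : c ≤ 0
    · have : t * J ≤ 0 := le_trans hle (by exact_mod_cast h)
      have ht0 : t ≤ 0 := by nlinarith
      have : idx1 J t = 0 := by unfold idx1; omega
      rw [this]
      rw [le_div_iff₀ hJR]
      push_cast
      nlinarith
    · push_neg at h
      have hidx : ((idx1 J t : ℕ) : ℝ) = (c : ℝ) - 1 := by
        unfold idx1; rw [← hc]
        have hz : ((c - 1).toNat : ℤ) = c - 1 := Int.toNat_of_nonneg (by omega)
        exact_mod_cast hz
      rw [hidx, le_div_iff₀ hJR]
      linarith

/-- block index of a point in the cube -/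
def bidx (d J : ℕ) (hJ : 0 < J) (x : Fin d → ℝ) (hx : x ∈ unitCube d) : Fin d → Fin J :=
  fun k => ⟨idx1 J (x k), idx1_lt hJ (hx.1 k) (hx.2 k)⟩

lemma mem_block_bidx {d J : ℕ} (hJ : 0 < J) {x : Fin d → ℝ} (hx : x ∈ unitCube d) :
    x ∈ block d J (bidx d J hJ x hx) :=
  fun k => idx1_mem hJ (hx.1 k) (hx.2 k)

lemma block_unique {d J : ℕ} {x : Fin d → ℝ} {j j' : Fin d → Fin J}
    (h : x ∈ block d J j) (h' : x ∈ block d J j') : j = j' :=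
  funext fun k => coord_unique (j k) (j' k) (x k) (h k) (h' k)

lemma pc_eval {d J : ℕ} (hJ : 0 < J) (θ : (Fin d → Fin J) → ℝ) {x : Fin d → ℝ}
    (hx : x ∈ unitCube d) : pc d J θ x = θ (bidx d J hJ x hx) := by
  unfold pc
  rw [Finset.sum_eq_single (bidx d J hJ x hx)]
  · rw [Set.indicator_of_mem (mem_block_bidx hJ hx)]
  · intro j _ hne
    refine Set.indicator_of_notMem (fun hmem => hne ?_) _
    exact block_unique hmem (mem_block_bidx hJ hx)
  · intro h; exact absurd (Finset.mem_univ _) h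

lemma lower_le_of_mem {d J : ℕ} {j : Fin d → Fin J} {x : Fin d → ℝ}
    (h : x ∈ block d J j) (hx : x ∈ unitCube d) :
    (fun k => ((j k : ℕ) : ℝ) / J) ≤ x := by
  intro k
  rcases h k with ⟨h1, _⟩
  by_cases h0 : (j k : ℕ) = 0
  · simp only [h0, Nat.cast_zero, zero_div]; exact hx.1 k
  · rw [if_neg h0] at h1; exact le_of_lt h1

lemma le_upper_of_mem {d J : ℕ} {j : Fin d → Fin J} {x : Fin d → ℝ}
    (h : x ∈ block d J j) : x ≤ fun k => (((j k : ℕ) : ℝ) + 1) / J :=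
  fun k => (h k).2

lemma lower_mem_cube {d J : ℕ} (hJ : 0 < J) (j : Fin d → Fin J) :
    (fun k => ((j k : ℕ) : ℝ) / J) ∈ unitCube d := by
  have hJR : (0:ℝ) < J := by exact_mod_cast hJ
  constructor
  · intro k; positivity
  · intro k
    show ((j k : ℕ) : ℝ) / J ≤ 1
    rw [div_le_one hJR]
    exact_mod_cast le_of_lt (j k).2

lemma upper_mem_cube {d J : ℕ} (hJ : 0 < J) (j : Fin d → Fin J) :
    (fun k => (((j k : ℕ) : ℝ) + 1) / J) ∈ unitCube d := by
  have hJR : (0:ℝ) < J := by exact_mod_cast hJ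
  constructor
  · intro k; positivity
  · intro k
    show (((j k : ℕ) : ℝ) + 1) / J ≤ 1
    rw [div_le_one hJR]
    have := (j k).2
    exact_mod_cast Nat.succ_le_of_lt this

lemma pointwise_bound {d J : ℕ} (hJ : 0 < J) {f : (Fin d → ℝ) → ℝ} (hf : MonOn d f)
    {θ : (Fin d → Fin J) → ℝ}
    (hθ : ∀ j : Fin d → Fin J,
      θ j ∈ Set.Icc (f (fun k => ((j k : ℕ) : ℝ) / J)) (f (fun k => (((j k : ℕ) : ℝ) + 1) / J)))
    {x : Fin d → ℝ} (hx : x ∈ unitCube d) :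
    |f x - pc d J θ x| ≤
      pc d J (fun j => f (fun k => (((j k : ℕ) : ℝ) + 1) / J) - f (fun k => ((j k : ℕ) : ℝ) / J)) x := by
  rw [pc_eval hJ θ hx, pc_eval hJ _ hx]
  set j := bidx d J hJ x hx with hj
  have hbl : x ∈ block d J j := mem_block_bidx hJ hx
  have hl := hf _ (lower_mem_cube hJ j) x hx (lower_le_of_mem hbl hx)
  have hu := hf x hx _ (upper_mem_cube hJ j) (le_upper_of_mem hbl)
  have h1 := (hθ j).1
  have h2 := (hθ j).2
  rw [abs_sub_le_iff]
  constructor <;> linarith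

lemma sum_osc_le (d J : ℕ) (hJ : 0 < J) (f : (Fin d → ℝ) → ℝ) (hf : MonOn d f) :
    (∑ j : Fin d → Fin J,
      (f (fun k => (((j k : ℕ) : ℝ) + 1) / J) - f (fun k => ((j k : ℕ) : ℝ) / J)))
      ≤ (d : ℝ) * (J : ℝ) ^ (d - 1) * (f 1 - f 0) := by
  have hJR : (0:ℝ) < J := by exact_mod_cast hJ
  set g : (Fin d → Fin J) → ℕ → (Fin d → ℝ) :=
    fun j i k => if (k : ℕ) < i then (((j k : ℕ) : ℝ) + 1) / J else ((j k : ℕ) : ℝ) / J with hg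
  have hstep : ∀ j : Fin d → Fin J,
      f (fun k => (((j k : ℕ) : ℝ) + 1) / J) - f (fun k => ((j k : ℕ) : ℝ) / J)
        = ∑ i ∈ Finset.range d, (f (g j (i+1)) - f (g j i)) := by
    intro j
    have e1 : (fun k : Fin d => (((j k : ℕ) : ℝ) + 1) / J) = g j d := by
      funext k; simp [hg, k.isLt]
    have e0 : (fun k : Fin d => ((j k : ℕ) : ℝ) / J) = g j 0 := by
      funext k; simp [hg]
    rw [e1, e0, Finset.sum_range_sub (fun i => f (g j i)) d]
  rw [Finset.sum_congr rfl (fun j _ => hstep j), Finset.sum_comm]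
  have hbound : ∀ i ∈ Finset.range d,
      (∑ j : Fin d → Fin J, (f (g j (i+1)) - f (g j i))) ≤ (J:ℝ) ^ (d-1) * (f 1 - f 0) := by
    intro i hi
    rw [Finset.mem_range] at hi
    set k : Fin d := ⟨i, hi⟩ with hk
    set w : ({l : Fin d // l ≠ k} → Fin J) → ℕ → (Fin d → ℝ) :=
      fun r n l => if h : l = k then (n : ℝ) / J
        else if (l : ℕ) < i then (((r ⟨l, h⟩ : ℕ) : ℝ) + 1) / J
        else ((r ⟨l, h⟩ : ℕ) : ℝ) / J with hw
    have hwcube : ∀ r n, n ≤ J → w r n ∈ unitCube d := by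
      intro r n hn
      have hcoord : ∀ l, 0 ≤ w r n l ∧ w r n l ≤ 1 := by
        intro l
        simp only [hw]
        split_ifs with h h2
        · exact ⟨by positivity, by rw [div_le_one hJR]; exact_mod_cast hn⟩
        · refine ⟨by positivity, ?_⟩
          rw [div_le_one hJR]
          exact_mod_cast Nat.succ_le_of_lt (r ⟨l, h⟩).2
        · refine ⟨by positivity, ?_⟩
          rw [div_le_one hJR]
          exact_mod_cast le_of_lt (r ⟨l, h⟩).2
      exact ⟨fun l => (hcoord l).1, fun l => (hcoord l).2⟩
    have hesymmk : ∀ (m : Fin J) (r : {l : Fin d // l ≠ k} → Fin J),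
        ((Equiv.funSplitAt k (Fin J)).symm (m, r)) k = m := by
      intro m r
      rw [Equiv.funSplitAt_symm_apply, dif_pos rfl]
    have hesymm : ∀ (m : Fin J) (r : {l : Fin d // l ≠ k} → Fin J) (l : Fin d) (h : l ≠ k),
        ((Equiv.funSplitAt k (Fin J)).symm (m, r)) l = r ⟨l, h⟩ := by
      intro m r l h
      rw [Equiv.funSplitAt_symm_apply, dif_neg h]
    have hgw : ∀ (m : Fin J) (r : {l : Fin d // l ≠ k} → Fin J) (n : ℕ),
        n = i ∨ n = i + 1 →
        g ((Equiv.funSplitAt k (Fin J)).symm (m, r)) n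
          = w r (if n = i then (m : ℕ) else (m : ℕ) + 1) := by
      intro m r n hn
      funext l
      simp only [hg, hw]
      by_cases h : l = k
      · subst h
        rw [dif_pos rfl, hesymmk m r]
        have hli : ((k : ℕ)) = i := rfl
        rcases hn with hni | hni
        · rw [if_neg (by omega), if_pos hni]
        · rw [if_pos (by omega), if_neg (by omega)]
          push_cast; ring
      · rw [dif_neg h, hesymm m r l h]
        have hki : ((k : ℕ)) = i := rfl
        have hli : (l : ℕ) ≠ i := fun hli => h (Fin.ext (by omega))
        have hiff : ((l : ℕ) < n) ↔ ((l : ℕ) < i) := by omega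
        rw [if_congr hiff rfl rfl]
    have key : (∑ j : Fin d → Fin J, (f (g j (i+1)) - f (g j i)))
        = ∑ r : {l : Fin d // l ≠ k} → Fin J, ∑ m : Fin J,
            (f (w r ((m : ℕ)+1)) - f (w r (m : ℕ))) := by
      rw [← Equiv.sum_comp (Equiv.funSplitAt k (Fin J)).symm
        (fun j => f (g j (i+1)) - f (g j i)), Fintype.sum_prod_type, Finset.sum_comm]
      refine Finset.sum_congr rfl fun r _ => Finset.sum_congr rfl fun m _ => ?_
      rw [hgw m r (i+1) (Or.inr rfl), hgw m r i (Or.inl rfl)]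
      simp
    have htel : ∀ r : {l : Fin d // l ≠ k} → Fin J,
        (∑ m : Fin J, (f (w r ((m : ℕ)+1)) - f (w r (m : ℕ)))) ≤ f 1 - f 0 := by
      intro r
      rw [Fin.sum_univ_eq_sum_range (fun m => f (w r (m+1)) - f (w r m)) J,
        Finset.sum_range_sub (fun m => f (w r m)) J]
      have hmem1 : w r J ∈ unitCube d := hwcube r J le_rfl
      have hmem0 : w r 0 ∈ unitCube d := hwcube r 0 (Nat.zero_le _)
      have h1 : f (w r J) ≤ f 1 := hf _ hmem1 1 ⟨zero_le_one, le_rfl⟩ hmem1.2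
      have h0 : f 0 ≤ f (w r 0) := hf 0 ⟨le_rfl, zero_le_one⟩ _ hmem0 hmem0.1
      linarith
    rw [key]
    calc (∑ r : {l : Fin d // l ≠ k} → Fin J, ∑ m : Fin J,
            (f (w r ((m : ℕ)+1)) - f (w r (m : ℕ))))
        ≤ ∑ _r : {l : Fin d // l ≠ k} → Fin J, (f 1 - f 0) :=
          Finset.sum_le_sum (fun r _ => htel r)
      _ = (J:ℝ) ^ (d-1) * (f 1 - f 0) := by
          rw [Finset.sum_const, Finset.card_univ]
          have hcard : Fintype.card ({l : Fin d // l ≠ k} → Fin J) = J ^ (d-1) := by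
            rw [Fintype.card_fun, Fintype.card_fin]
            congr 1
            rw [Fintype.card_subtype_compl, Fintype.card_fin, Fintype.card_subtype_eq]
          rw [hcard, nsmul_eq_mul]
          push_cast
          ring
  calc (∑ i ∈ Finset.range d, ∑ j : Fin d → Fin J, (f (g j (i+1)) - f (g j i)))
      ≤ ∑ _i ∈ Finset.range d, ((J:ℝ) ^ (d-1) * (f 1 - f 0)) := Finset.sum_le_sum hbound
    _ = (d : ℝ) * (J : ℝ) ^ (d-1) * (f 1 - f 0) := by
        rw [Finset.sum_const, Finset.card_range, nsmul_eq_mul]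
        ring

/-- L¹(G*) approximation of a multivariate monotone function by a blockwise constant
function, at rate d·(f(1)-f(0))/J, for any probability measure with block masses
bounded by C/J^d. -/
theorem monotone_L1_approximation (C : ℝ) (hC : 0 ≤ C) :
    ∃ C' : ℝ, 0 < C' ∧
      ∀ (d J : ℕ), 0 < J →
        ∀ (f : (Fin d → ℝ) → ℝ), MonOn d f →
        ∀ θ : (Fin d → Fin J) → ℝ,
          (∀ j : Fin d → Fin J,
            θ j ∈ Set.Icc (f (fun k => ((j k : ℕ) : ℝ) / J))
                          (f (fun k => (((j k : ℕ) : ℝ) + 1) / J))) →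
        ∀ (G : Measure (Fin d → ℝ)), IsProbabilityMeasure G →
          (∀ j : Fin d → Fin J, (G (block d J j)).toReal ≤ C / (J : ℝ) ^ d) →
          (∫ x in unitCube d, |f x - pc d J θ x| ∂G) ≤
            C' * d * (f 1 - f 0) / J := by
  refine ⟨C + 1, by linarith, ?_⟩
  intro d J hJ f hf θ hθ G hG hGb
  have hJR : (0:ℝ) < J := by exact_mod_cast hJ
  set osc : (Fin d → Fin J) → ℝ :=
    fun j => f (fun k => (((j k : ℕ) : ℝ) + 1) / J) - f (fun k => ((j k : ℕ) : ℝ) / J) with hosc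
  have hosc0 : ∀ j, 0 ≤ osc j := by
    intro j
    refine sub_nonneg.mpr (hf _ (lower_mem_cube hJ j) _ (upper_mem_cube hJ j) (fun k => ?_))
    show ((j k : ℕ) : ℝ) / J ≤ (((j k : ℕ) : ℝ) + 1) / J
    gcongr
    linarith
  have hΔ : 0 ≤ f 1 - f 0 :=
    sub_nonneg.mpr (hf 0 ⟨le_rfl, zero_le_one⟩ 1 ⟨zero_le_one, le_rfl⟩ zero_le_one)
  have hpc_nonneg : ∀ x, 0 ≤ pc d J osc x := by
    intro x
    exact Finset.sum_nonneg fun j _ => Set.indicator_nonneg (fun _ _ => hosc0 j) x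
  have hInt : Integrable (pc d J osc) G := by
    have : Integrable (fun x => ∑ j : Fin d → Fin J,
        Set.indicator (block d J j) (fun _ => osc j) x) G := by
      apply integrable_finset_sum
      intro j _
      exact (integrable_const (osc j)).indicator (block_measurable d J j)
    exact this
  have step1 : (∫ x in unitCube d, |f x - pc d J θ x| ∂G)
      ≤ ∫ x in unitCube d, pc d J osc x ∂G := by
    refine integral_mono_of_nonneg (Filter.Eventually.of_forall fun x => abs_nonneg _)
      hInt.restrict ?_
    refine (ae_restrict_iff' measurableSet_Icc).mpr
      (Filter.Eventually.of_forall fun x hx => ?_)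
    exact pointwise_bound hJ hf hθ hx
  have step2 : (∫ x in unitCube d, pc d J osc x ∂G) ≤ ∫ x, pc d J osc x ∂G :=
    integral_mono_measure Measure.restrict_le_self
      (Filter.Eventually.of_forall hpc_nonneg) hInt
  have step3 : (∫ x, pc d J osc x ∂G)
      = ∑ j : Fin d → Fin J, osc j * (G (block d J j)).toReal := by
    rw [show (fun x => pc d J osc x) = fun x => ∑ j : Fin d → Fin J,
        Set.indicator (block d J j) (fun _ => osc j) x from rfl]
    rw [integral_finset_sum _ (fun j _ =>
      (integrable_const (osc j)).indicator (block_measurable d J j))]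
    refine Finset.sum_congr rfl fun j _ => ?_
    rw [integral_indicator_const _ (block_measurable d J j), smul_eq_mul, mul_comm]
    rfl
  have step4 : (∑ j : Fin d → Fin J, osc j * (G (block d J j)).toReal)
      ≤ (C / (J:ℝ) ^ d) * ∑ j : Fin d → Fin J, osc j := by
    rw [Finset.mul_sum]
    refine Finset.sum_le_sum fun j _ => ?_
    rw [mul_comm (C / (J:ℝ)^d)]
    exact mul_le_mul_of_nonneg_left (hGb j) (hosc0 j)
  have step5 : (C / (J:ℝ) ^ d) * (∑ j : Fin d → Fin J, osc j)
      ≤ (C / (J:ℝ) ^ d) * ((d : ℝ) * (J : ℝ) ^ (d - 1) * (f 1 - f 0)) :=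
    mul_le_mul_of_nonneg_left (sum_osc_le d J hJ f hf) (by positivity)
  have step6 : (C / (J:ℝ) ^ d) * ((d : ℝ) * (J : ℝ) ^ (d - 1) * (f 1 - f 0))
      ≤ (C + 1) * d * (f 1 - f 0) / J := by
    rcases Nat.eq_zero_or_pos d with rfl | hd
    · simp
    · have hpow : (J:ℝ) ^ d = (J:ℝ) ^ (d - 1) * J := by
        rw [← pow_succ]
        congr 1
        omega
      rw [hpow]
      rw [div_mul_eq_mul_div, div_le_div_iff₀ (by positivity) hJR]
      have hJp : (0:ℝ) < (J:ℝ) ^ (d-1) := by positivity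
      have hCd : C * ((d:ℝ) * (J:ℝ)^(d-1) * (f 1 - f 0)) ≤ (C+1) * (d:ℝ) * (f 1 - f 0) * (J:ℝ)^(d-1) := by
        nlinarith [mul_nonneg (mul_nonneg (Nat.cast_nonneg d : (0:ℝ) ≤ d) hJp.le) hΔ]
      calc C * ((d:ℝ) * (J:ℝ)^(d-1) * (f 1 - f 0)) * J
          ≤ (C+1) * (d:ℝ) * (f 1 - f 0) * (J:ℝ)^(d-1) * J := by
            exact mul_le_mul_of_nonneg_right hCd hJR.le
        _ = (C + 1) * ↑d * (f 1 - f 0) * ((J:ℝ)^(d-1) * J) := by ring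
  linarith [step1, step2, step3.le, step3.ge, step4, step5, step6]
end
end
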